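/- If |φ⟩ is a class state (f(g) := ⟨φ|U_g|φ⟩ is a class function), then the connected component of the identity H = { h ∈ G : h ∼ e } is a normal subgroup of G. -/

import Mathlib

open scoped InnerProductSpace

/-- For a class state, the identity component of the confusability graph is a
normal subgroup of `G`. -/
theorem confusability_identity_component_normal_of_class_state
    {G : Type*} [Group G] {H : Type*} [NormedAddCommGroup H] [InnerProductSpace ℂ H]
    (U : G →* (H ≃ₗᵢ[ℂ] H)) (φ : H) (hφ : ‖φ‖ = 1)
    (hclass : ∀ g h : G, ⟪φ, U (h⁻¹ * g * h) φ⟫_ℂ = ⟪φ, U g φ⟫_ℂ)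
    (Conn : G → G → Prop)
    (hConn : Conn = Relation.ReflTransGen (fun g h : G => ⟪U g φ, U h φ⟫_ℂ ≠ 0)) :
    ∃ K : Subgroup G, K.Normal ∧ (K : Set G) = {h : G | Conn h 1} := by
  subst hConn
  set R : G → G → Prop := fun g h => ⟪U g φ, U h φ⟫_ℂ ≠ 0 with hR
  -- rewrite the inner product as a function of g⁻¹ * h
  have hinner : ∀ g h : G, ⟪U g φ, U h φ⟫_ℂ = ⟪φ, U (g⁻¹ * h) φ⟫_ℂ := by
    intro g h
    have h1 := (U g⁻¹).inner_map_map (U g φ) (U h φ)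
    have h2 : (U g⁻¹) ((U g) φ) = φ := by
      have : U (g⁻¹ * g) φ = (U g⁻¹) ((U g) φ) := by simp [map_mul]
      rw [← this]; simp
    have h3 : (U g⁻¹) ((U h) φ) = U (g⁻¹ * h) φ := by simp [map_mul]
    rw [← h1, h2, h3]
  -- R is symmetric
  have hsymm : Symmetric R := by
    intro g h hgh h0
    exact hgh (inner_eq_zero_symm.mp h0)
  -- R is left-invariant
  have hLR : ∀ k g h : G, R g h → R (k * g) (k * h) := by
    intro k g h hgh
    simp only [hR, hinner] at hgh ⊢
    have : (k * g)⁻¹ * (k * h) = g⁻¹ * h := by group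
    rw [this]; exact hgh
  -- R is conjugation-invariant
  have hCR : ∀ k g h : G, R g h → R (k⁻¹ * g * k) (k⁻¹ * h * k) := by
    intro k g h hgh
    simp only [hR, hinner] at hgh ⊢
    have : (k⁻¹ * g * k)⁻¹ * (k⁻¹ * h * k) = k⁻¹ * (g⁻¹ * h) * k := by group
    rw [this, hclass]; exact hgh
  -- lift invariances to the closure
  have hLC : ∀ k g h : G, Relation.ReflTransGen R g h →
      Relation.ReflTransGen R (k * g) (k * h) := by
    intro k g h hc
    induction hc with
    | refl => exact .refl
    | tail _ hstep ih => exact ih.tail (hLR k _ _ hstep)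
  have hCC : ∀ k g h : G, Relation.ReflTransGen R g h →
      Relation.ReflTransGen R (k⁻¹ * g * k) (k⁻¹ * h * k) := by
    intro k g h hc
    induction hc with
    | refl => exact .refl
    | tail _ hstep ih => exact ih.tail (hCR k _ _ hstep)
  have hsymmC : Symmetric (Relation.ReflTransGen R) := by
    haveI : Std.Symm R := ⟨fun a b h => hsymm h⟩
    exact fun a b h => (show Std.Symm (Relation.ReflTransGen R) from
      Relation.ReflTransGen.symmetric).symm a b h
  refine ⟨{ carrier := {h : G | Relation.ReflTransGen R h 1}
            one_mem' := .refl
            mul_mem' := ?_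
            inv_mem' := ?_ }, ⟨?_⟩, rfl⟩
  · intro a b ha hb
    have h1 : Relation.ReflTransGen R (a * b) (a * 1) := hLC a b 1 hb
    rw [mul_one] at h1
    exact h1.trans ha
  · intro a ha
    have h1 : Relation.ReflTransGen R (a⁻¹ * a) (a⁻¹ * 1) := hLC a⁻¹ a 1 ha
    rw [mul_one, inv_mul_cancel] at h1
    exact hsymmC h1
  · intro n hn g
    have h1 : Relation.ReflTransGen R ((g⁻¹)⁻¹ * n * g⁻¹) ((g⁻¹)⁻¹ * 1 * g⁻¹) :=
      hCC g⁻¹ n 1 hn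
    simp only [inv_inv, mul_one, mul_inv_cancel] at h1
    exact h1
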